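/- Let n ≥ 2, let p be a prime, let Γ be a group with subgroups K_0,…,K_n whose union generates Γ, and let N be a normal subgroup of Γ that is generated by a set of elements each of order p. Let Λ be a group containing no nontrivial element of order p. If H^1(CC(Γ,{K_i}),Λ) = 0, then H^1(CC(Γ/N, {images of K_i in Γ/N}),Λ) = 0, i.e., every Λ-valued 1-cocycle on the coset complex of Γ/N with respect to the images of the K_i is a 1-coboundary. -/

import Mathlib

/-- The vertices of the coset complex `CC(Γ, {K_0,…,K_n})`: left cosets `gK_i`. -/
def ccVert {Γ : Type*} [Group Γ] {n : ℕ} (K : Fin (n + 1) → Subgroup Γ) :=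
  Σ i : Fin (n + 1), Γ ⧸ K i

/-- Two vertices of the coset complex are adjacent (span an edge) iff they have different
colors and the corresponding cosets intersect nontrivially; simplices of the coset complex
are sets of pairwise adjacent vertices. -/
def ccAdj {Γ : Type*} [Group Γ] {n : ℕ} (K : Fin (n + 1) → Subgroup Γ) :
    ccVert K → ccVert K → Prop := fun u v =>
  u.1 ≠ v.1 ∧ ∃ g : Γ,
    (QuotientGroup.mk g : Γ ⧸ K u.1) = u.2 ∧ (QuotientGroup.mk g : Γ ⧸ K v.1) = v.2

/-- `H¹(X, Λ) = 0` for the complex whose edges are given by `Adj` and whose `2`-simplices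
are the triples of pairwise adjacent vertices: every `Λ`-valued `1`-cocycle is a
`1`-coboundary. -/
def H1Trivial {V : Type*} (Adj : V → V → Prop) (Λ : Type*) [Group Λ] : Prop :=
  ∀ φ : V → V → Λ,
    (∀ u v, Adj u v → φ u v = (φ v u)⁻¹) →
    (∀ u v w, Adj u v → Adj v w → Adj u w → φ u v * φ v w * φ w u = 1) →
    ∃ ψ : V → Λ, ∀ u v, Adj u v → φ u v = ψ u * (ψ v)⁻¹

namespace CCAux

variable {Γ : Type*} [Group Γ] {n : ℕ} (K : Fin (n + 1) → Subgroup Γ)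
  (N : Subgroup Γ) [N.Normal]

/-- The projection `CC(Γ,{K_i}) → CC(Γ/N,{K_i N/N})` on vertices. -/
def pi : ccVert K → ccVert (fun i => (K i).map (QuotientGroup.mk' N)) :=
  fun u => ⟨u.1, Quotient.map' (QuotientGroup.mk' N)
    (fun a b h => by
      rw [QuotientGroup.leftRel_apply] at h ⊢
      exact ⟨a⁻¹ * b, h, by simp⟩) u.2⟩

@[simp] lemma pi_mk (i : Fin (n + 1)) (g : Γ) :
    pi K N ⟨i, QuotientGroup.mk g⟩
      = ⟨i, (QuotientGroup.mk (QuotientGroup.mk g : Γ ⧸ N) :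
          (Γ ⧸ N) ⧸ (K i).map (QuotientGroup.mk' N))⟩ := rfl

/-- Left multiplication action of `Γ` on vertices. -/
def act (g : Γ) (u : ccVert K) : ccVert K := ⟨u.1, g • u.2⟩

@[simp] lemma act_mk (g : Γ) (i : Fin (n + 1)) (h : Γ) :
    act K g ⟨i, QuotientGroup.mk h⟩ = ⟨i, QuotientGroup.mk (g * h)⟩ := rfl

lemma act_act (g h : Γ) (u : ccVert K) : act K g (act K h u) = act K (g * h) u := by
  obtain ⟨i, x⟩ := u
  simp [act, mul_smul]; rfl

@[simp] lemma act_one (u : ccVert K) : act K 1 u = u := by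
  obtain ⟨i, x⟩ := u
  simp [act]; rfl

lemma adj_symm : Symmetric (ccAdj K) := by
  rintro u v ⟨hne, g, h1, h2⟩
  exact ⟨hne.symm, g, h2, h1⟩

lemma adj_act (g : Γ) {u v : ccVert K} (h : ccAdj K u v) : ccAdj K (act K g u) (act K g v) := by
  obtain ⟨i, x⟩ := u
  obtain ⟨j, y⟩ := v
  induction x using QuotientGroup.induction_on with | _ a =>
  induction y using QuotientGroup.induction_on with | _ b =>
  obtain ⟨hne, w, h1, h2⟩ := h
  rw [QuotientGroup.eq] at h1 h2
  refine ⟨hne, g * w, ?_, ?_⟩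
  · show (QuotientGroup.mk (g * w) : Γ ⧸ K i) = QuotientGroup.mk (g * a)
    rw [QuotientGroup.eq]
    have he : (g * w)⁻¹ * (g * a) = w⁻¹ * a := by group
    rw [he]; exact h1
  · show (QuotientGroup.mk (g * w) : Γ ⧸ K j) = QuotientGroup.mk (g * b)
    rw [QuotientGroup.eq]
    have he : (g * w)⁻¹ * (g * b) = w⁻¹ * b := by group
    rw [he]; exact h2

lemma adj_pi {u v : ccVert K} (h : ccAdj K u v) : ccAdj (fun i => (K i).map (QuotientGroup.mk' N)) (pi K N u) (pi K N v) := by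
  obtain ⟨i, x⟩ := u
  obtain ⟨j, y⟩ := v
  induction x using QuotientGroup.induction_on with | _ a =>
  induction y using QuotientGroup.induction_on with | _ b =>
  obtain ⟨hne, g, h1, h2⟩ := h
  refine ⟨hne, QuotientGroup.mk g, ?_, ?_⟩
  · show _ = (QuotientGroup.mk (QuotientGroup.mk a : Γ ⧸ N) : _)
    rw [QuotientGroup.eq] at h1 ⊢
    exact ⟨g⁻¹ * a, h1, by simp⟩
  · show _ = (QuotientGroup.mk (QuotientGroup.mk b : Γ ⧸ N) : _)
    rw [QuotientGroup.eq] at h2 ⊢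
    exact ⟨g⁻¹ * b, h2, by simp⟩

lemma pi_act {m : Γ} (hm : m ∈ N) (u : ccVert K) : pi K N (act K m u) = pi K N u := by
  obtain ⟨i, x⟩ := u
  induction x using QuotientGroup.induction_on with | _ a =>
  rw [act_mk, pi_mk, pi_mk]
  have hNa : (QuotientGroup.mk (m * a) : Γ ⧸ N) = QuotientGroup.mk a := by
    rw [QuotientGroup.eq]
    have he : (m * a)⁻¹ * a = a⁻¹ * m⁻¹ * (a⁻¹)⁻¹ := by group
    rw [he]
    exact ‹N.Normal›.conj_mem m⁻¹ (N.inv_mem hm) a⁻¹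
  rw [hNa]

lemma pi_surj (v : ccVert (fun i => (K i).map (QuotientGroup.mk' N))) : ∃ u, pi K N u = v := by
  obtain ⟨i, x⟩ := v
  induction x using QuotientGroup.induction_on with | _ a =>
  induction a using QuotientGroup.induction_on with | _ g =>
  exact ⟨⟨i, QuotientGroup.mk g⟩, rfl⟩

lemma fiber {u u' : ccVert K} (h : pi K N u = pi K N u') : ∃ m ∈ N, u' = act K m u := by
  obtain ⟨i, x⟩ := u
  obtain ⟨i', x'⟩ := u'
  induction x using QuotientGroup.induction_on with | _ g =>
  induction x' using QuotientGroup.induction_on with | _ g' =>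
  rw [pi_mk, pi_mk] at h
  obtain ⟨hi, hx⟩ := Sigma.mk.inj_iff.mp h
  subst hi
  rw [heq_iff_eq, QuotientGroup.eq] at hx
  obtain ⟨k, hk, hkeq⟩ := hx
  have hkeq' : (QuotientGroup.mk k : Γ ⧸ N) = QuotientGroup.mk (g⁻¹ * g') := by
    simpa using hkeq
  rw [QuotientGroup.eq] at hkeq'
  set m₀ : Γ := k⁻¹ * (g⁻¹ * g') with hm₀
  refine ⟨g * k * m₀ * k⁻¹ * g⁻¹, ?_, ?_⟩
  · have h1 : g * k * m₀ * k⁻¹ * g⁻¹ = (g * k) * m₀ * (g * k)⁻¹ := by group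
    rw [h1]
    exact ‹N.Normal›.conj_mem m₀ hkeq' (g * k)
  · rw [act_mk]
    congr 1
    rw [QuotientGroup.eq]
    have h2 : g'⁻¹ * (g * k * m₀ * k⁻¹ * g⁻¹ * g) = k⁻¹ := by rw [hm₀]; group
    rw [h2]
    exact (K i).inv_mem hk

/-- Reachability in the 1-skeleton. -/
def Reach : ccVert K → ccVert K → Prop := Relation.ReflTransGen (ccAdj K)

lemma reach_symm {u v : ccVert K} (h : Reach K u v) : Reach K v u :=
  by
    induction h with
    | refl => exact Relation.ReflTransGen.refl
    | tail _ hbc ih => exact (Relation.ReflTransGen.single (adj_symm K hbc)).trans ih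

lemma reach_act (g : Γ) {u v : ccVert K} (h : Reach K u v) :
    Reach K (act K g u) (act K g v) :=
  Relation.ReflTransGen.lift (act K g) (fun _ _ hab => adj_act K g hab) _ _ h

lemma reach_color (g : Γ) (i j : Fin (n + 1)) :
    Reach K ⟨i, QuotientGroup.mk g⟩ ⟨j, QuotientGroup.mk g⟩ := by
  rcases eq_or_ne i j with rfl | hne
  · exact Relation.ReflTransGen.refl
  · exact Relation.ReflTransGen.single ⟨hne, g, rfl, rfl⟩

lemma reach_base (hgen : Subgroup.closure (⋃ i, ((K i : Subgroup Γ) : Set Γ)) = ⊤) (g : Γ) :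
    Reach K ⟨0, QuotientGroup.mk 1⟩ ⟨0, QuotientGroup.mk g⟩ := by
  have hg : g ∈ Subgroup.closure (⋃ i, ((K i : Subgroup Γ) : Set Γ)) := by
    rw [hgen]; trivial
  induction hg using Subgroup.closure_induction with
  | mem x hx =>
      obtain ⟨s, ⟨j, rfl⟩, hxj⟩ := hx
      rcases eq_or_ne (0 : Fin (n + 1)) j with rfl | hne
      · have : (QuotientGroup.mk x : Γ ⧸ K 0) = QuotientGroup.mk 1 := by
          rw [QuotientGroup.eq]; simpa using (K 0).inv_mem hxj
        rw [this]
        exact Relation.ReflTransGen.refl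
      · have h1 : (QuotientGroup.mk (1:Γ) : Γ ⧸ K j) = QuotientGroup.mk x := by
          rw [QuotientGroup.eq]; simpa using hxj
        have r2 : Reach K ⟨j, QuotientGroup.mk 1⟩ ⟨0, QuotientGroup.mk x⟩ := by
          rw [h1]; exact reach_color K x j 0
        exact (reach_color K 1 0 j).trans r2
  | one => exact Relation.ReflTransGen.refl
  | mul x y hx hy ihx ihy =>
      refine ihx.trans ?_
      have := reach_act K x ihy
      rw [act_mk, act_mk, mul_one] at this
      exact this
  | inv x hx ihx =>
      have := reach_act K x⁻¹ (reach_symm K ihx)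
      rw [act_mk, act_mk, mul_one, inv_mul_cancel] at this
      exact this

lemma reach_all (hgen : Subgroup.closure (⋃ i, ((K i : Subgroup Γ) : Set Γ)) = ⊤)
    (u v : ccVert K) : Reach K u v := by
  have h : ∀ w : ccVert K, Reach K ⟨0, QuotientGroup.mk 1⟩ w := by
    rintro ⟨i, x⟩
    induction x using QuotientGroup.induction_on with | _ g =>
    exact (reach_base K hgen g).trans (reach_color K g 0 i)
  exact (reach_symm K (h u)).trans (h v)

end CCAux


open CCAux

/-- Let `n ≥ 2`, `p` prime, `Γ` a group with subgroups `K_0,…,K_n` whose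
union generates `Γ`, and `N ⊴ Γ` generated by a set of elements of order `p`.  If `Λ` has no
nontrivial element of order `p` and `H¹(CC(Γ,{K_i}), Λ) = 0`, then
`H¹(CC(Γ/N, {images of K_i}), Λ) = 0`. -/
theorem h1_trivial_quotient_cosetComplex_orderP {Γ : Type*} [Group Γ] (n p : ℕ)
    (hn : 2 ≤ n) (hp : p.Prime)
    (K : Fin (n + 1) → Subgroup Γ)
    (hgen : Subgroup.closure (⋃ i, (K i : Set Γ)) = ⊤)
    (N : Subgroup Γ) [N.Normal]
    (hNgen : ∃ S : Set Γ, (∀ g ∈ S, orderOf g = p) ∧ Subgroup.closure S = N)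
    (Λ : Type*) [Group Λ] (hΛ : ∀ x : Λ, x ≠ 1 → orderOf x ≠ p)
    (hX : H1Trivial (ccAdj K) Λ) :
    H1Trivial (ccAdj fun i => (K i).map (QuotientGroup.mk' N)) Λ := by
  intro φ hsym hcoc
  -- pull back the cocycle
  set φ' : ccVert K → ccVert K → Λ := fun u v => φ (pi K N u) (pi K N v) with hφ'
  obtain ⟨ψ, hψ⟩ := hX φ'
    (fun u v h => hsym _ _ (adj_pi K N h))
    (fun u v w h1 h2 h3 => hcoc _ _ _ (adj_pi K N h1) (adj_pi K N h2) (adj_pi K N h3))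
  obtain ⟨S, hS, hSN⟩ := hNgen
  -- the defect of equivariance along an edge
  have step : ∀ m ∈ N, ∀ u v : ccVert K, ccAdj K u v →
      (ψ u)⁻¹ * ψ (act K m u) = (ψ v)⁻¹ * ψ (act K m v) := by
    intro m hm u v huv
    have e1 : φ' u v = ψ u * (ψ v)⁻¹ := hψ u v huv
    have e2 : φ' (act K m u) (act K m v) = ψ (act K m u) * (ψ (act K m v))⁻¹ :=
      hψ _ _ (adj_act K m huv)
    have e3 : φ' (act K m u) (act K m v) = φ' u v := by
      rw [hφ']; simp only [pi_act K N hm]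
    have h : ψ u * (ψ v)⁻¹ = ψ (act K m u) * (ψ (act K m v))⁻¹ := by
      rw [← e1, ← e3, e2]
    have h2 : ψ (act K m u) = ψ u * (ψ v)⁻¹ * ψ (act K m v) := by rw [h]; group
    rw [h2]; group
  have keyR : ∀ m ∈ N, ∀ u v : ccVert K, Reach K u v →
      (ψ u)⁻¹ * ψ (act K m u) = (ψ v)⁻¹ * ψ (act K m v) := by
    intro m hm u v hr
    induction hr with
    | refl => rfl
    | tail _ hbc ih => exact ih.trans (step m hm _ _ hbc)
  set base : ccVert K := ⟨0, QuotientGroup.mk 1⟩ with hbase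
  set c : Γ → Λ := fun m => (ψ base)⁻¹ * ψ (act K m base) with hc
  have hconst : ∀ m ∈ N, ∀ u : ccVert K, ψ (act K m u) = ψ u * c m := by
    intro m hm u
    have h := keyR m hm base u (reach_all K hgen base u)
    show ψ (act K m u) = ψ u * ((ψ base)⁻¹ * ψ (act K m base))
    rw [h]; group
  have hone : c 1 = 1 := by
    show (ψ base)⁻¹ * ψ (act K 1 base) = 1
    rw [act_one]; group
  have hmul : ∀ m ∈ N, ∀ m' ∈ N, c (m * m') = c m' * c m := by
    intro m hm m' hm'
    have h1 : ψ (act K (m * m') base) = ψ base * c (m * m') := hconst _ (N.mul_mem hm hm') base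
    have h2 : ψ (act K (m * m') base) = ψ base * c m' * c m := by
      rw [← act_act, hconst m hm, hconst m' hm', mul_assoc]
    rw [h2] at h1
    have h3 : ψ base * (c m' * c m) = ψ base * c (m * m') := by rw [← mul_assoc]; exact h1
    exact (mul_left_cancel h3).symm
  have hpow : ∀ s ∈ N, ∀ k : ℕ, c (s ^ k) = c s ^ k := by
    intro s hs k
    induction k with
    | zero => simpa using hone
    | succ k ih =>
        rw [pow_succ, hmul _ (N.pow_mem hs k) s hs, ih, ← pow_succ']
  -- on generators the defect is trivial
  have hS1 : ∀ s ∈ S, c s = 1 := by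
    intro s hsS
    have hsN : s ∈ N := by rw [← hSN]; exact Subgroup.subset_closure hsS
    have hsp : s ^ p = 1 := by rw [← hS s hsS]; exact pow_orderOf_eq_one s
    have hcp : c s ^ p = 1 := by rw [← hpow s hsN p, hsp, hone]
    by_contra hne
    have hdvd := orderOf_dvd_of_pow_eq_one hcp
    rcases (Nat.Prime.eq_one_or_self_of_dvd hp _ hdvd) with h1 | h1
    · exact hne (orderOf_eq_one_iff.mp h1)
    · exact hΛ (c s) hne h1
  -- `ψ` is `N`-invariant
  have hinv : ∀ m ∈ N, ∀ u : ccVert K, ψ (act K m u) = ψ u := by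
    intro m hm
    rw [← hSN] at hm
    induction hm using Subgroup.closure_induction with
    | mem s hsS =>
        intro u
        have hsN : s ∈ N := by rw [← hSN]; exact Subgroup.subset_closure hsS
        rw [hconst s hsN u, hS1 s hsS, mul_one]
    | one => intro u; rw [act_one]
    | mul a b ha hb iha ihb =>
        intro u
        rw [← act_act, iha, ihb]
    | inv a ha iha =>
        intro u
        have h := iha (act K a⁻¹ u)
        rw [act_act, mul_inv_cancel, act_one] at h
        exact h.symm
  -- descend `ψ` along `pi`
  choose sec hsec using pi_surj K N
  refine ⟨fun v => ψ (sec v), ?_⟩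
  intro ub vb hadj
  show φ ub vb = ψ (sec ub) * (ψ (sec vb))⁻¹
  -- lift the edge
  obtain ⟨i, x⟩ := ub
  obtain ⟨j, y⟩ := vb
  obtain ⟨hne, gb, h1, h2⟩ := hadj
  induction gb using QuotientGroup.induction_on with | _ g =>
  have hu : pi K N ⟨i, QuotientGroup.mk g⟩ = ⟨i, x⟩ := by
    rw [pi_mk]; exact congrArg _ h1
  have hv : pi K N ⟨j, QuotientGroup.mk g⟩ = ⟨j, y⟩ := by
    rw [pi_mk]; exact congrArg _ h2
  have hadj' : ccAdj K ⟨i, QuotientGroup.mk g⟩ ⟨j, QuotientGroup.mk g⟩ := ⟨hne, g, rfl, rfl⟩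
  have e1 : φ (⟨i, x⟩ : ccVert fun i => (K i).map (QuotientGroup.mk' N)) ⟨j, y⟩
      = ψ ⟨i, QuotientGroup.mk g⟩ * (ψ ⟨j, QuotientGroup.mk g⟩)⁻¹ := by
    rw [← hu, ← hv]
    exact hψ _ _ hadj'
  have efib : ∀ (w : ccVert K) (z : ccVert fun i => (K i).map (QuotientGroup.mk' N)),
      pi K N w = z → ψ (sec z) = ψ w := by
    intro w z hz
    obtain ⟨m, hm, hw⟩ := fiber K N (hz.trans (hsec z).symm)
    rw [hw, hinv m hm]
  rw [e1, efib _ _ hu, efib _ _ hv]
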